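/- arXiv:2512.15511 — 2 statements merged into one kernel-verified Lean document; each statement's English description precedes it below -/
import Mathlib

section
/- If s and t are non-negative integers with s ≥ t and s^2 + t^2 is a power of 2 greater than 1, then either t = 0 and s is a power of 2, or s = t and s is a power of 2. -/
theorem aux_pow2 : ∀ n s t : ℕ, t ≤ s → s ^ 2 + t ^ 2 = 2 ^ n →
    (t = 0 ∧ ∃ e, s = 2 ^ e) ∨ (s = t ∧ ∃ e, s = 2 ^ e) := by
  intro n
  induction n using Nat.strong_induction_on with
  | _ n ih =>
    intro s t hst h
    match n with
    | 0 =>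
      have hs : s ≤ 1 := by nlinarith
      interval_cases s <;> interval_cases t <;> simp_all
      exact ⟨0, rfl⟩
    | 1 =>
      have hs : s ≤ 1 := by nlinarith
      interval_cases s <;> interval_cases t <;> simp_all
      exact ⟨0, rfl⟩
    | (m + 2) =>
      have h4 : s ^ 2 + t ^ 2 = 4 * 2 ^ m := by rw [h]; ring
      rcases Nat.even_or_odd s with ⟨a, rfl⟩ | ⟨a, rfl⟩ <;>
        rcases Nat.even_or_odd t with ⟨b, rfl⟩ | ⟨b, rfl⟩
      · have hab : a ^ 2 + b ^ 2 = 2 ^ m := by nlinarith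
        have hba : b ≤ a := by omega
        rcases ih m (by omega) a b hba hab with ⟨hb0, e, he⟩ | ⟨hab', e, he⟩
        · exact Or.inl ⟨by omega, e + 1, by rw [pow_succ]; omega⟩
        · exact Or.inr ⟨by omega, e + 1, by rw [pow_succ]; omega⟩
      · exfalso
        have : 4 * (a ^ 2 + b ^ 2 + b) + 1 = 4 * 2 ^ m := by nlinarith
        omega
      · exfalso
        have : 4 * (a ^ 2 + a + b ^ 2) + 1 = 4 * 2 ^ m := by nlinarith
        omega
      · exfalso
        have : 4 * (a ^ 2 + a + b ^ 2 + b) + 2 = 4 * 2 ^ m := by nlinarith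
        omega

/-- If `s ≥ t` are naturals and `s² + t²` is a power of 2 greater than 1, then either
`t = 0` and `s` is a power of 2, or `s = t` and `s` is a power of 2. -/
theorem stmt_1 (s t : ℕ) (hst : t ≤ s) (n : ℕ) (hn : 1 ≤ n)
    (h : s ^ 2 + t ^ 2 = 2 ^ n) :
    (t = 0 ∧ ∃ e, s = 2 ^ e) ∨ (s = t ∧ ∃ e, s = 2 ^ e) := by
  exact aux_pow2 n s t hst h
end

section
/- The toroidal regular polyhedra of type {4,4} with automorphism group a 2-group have group orders exactly the powers 2^n with n ≥ 5, and for each n ≥ 5 there is exactly one such polyhedron: the order of the automorphism group of {4,4}_{(s,t)} is 8(s²+t²), and 8(s²+t²) is a power of 2 with (s ≥ 2, t = 0 or s = t ≥ 2) if and only if (s,t) = (2^e, 0) (order 2^{2e+3}) or (s,t) = (2^e, 2^e) (order 2^{2e+4}) for some e ≥ 1. -/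
lemma aux_pow2_s17 {s k : ℕ} (h : s ∣ 2 ^ k) : ∃ e, s = 2 ^ e := by
  obtain ⟨i, _, rfl⟩ := (Nat.dvd_prime_pow Nat.prime_two).mp h
  exact ⟨i, rfl⟩

lemma aux_inj {a b : ℕ} (h : (2:ℕ) ^ a = 2 ^ b) : a = b :=
  Nat.pow_right_injective (le_refl 2) h

/-- For admissible parameters (`s ≥ 2, t = 0` or `s = t ≥ 2`), `8(s²+t²)` is a power
`2^n` iff `(s,t) = (2^e,0)` with `n = 2e+3`, or `(s,t) = (2^e,2^e)` with `n = 2e+4`,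
for some `e ≥ 1`; and for each `n ≥ 5` exactly one admissible pair works. -/
theorem stmt_17 :
    (∀ s t n : ℕ, ((2 ≤ s ∧ t = 0) ∨ (s = t ∧ 2 ≤ s)) →
      (8 * (s ^ 2 + t ^ 2) = 2 ^ n ↔
        (∃ e, 1 ≤ e ∧ s = 2 ^ e ∧ t = 0 ∧ n = 2 * e + 3) ∨
        (∃ e, 1 ≤ e ∧ s = 2 ^ e ∧ t = 2 ^ e ∧ n = 2 * e + 4))) ∧
    (∀ n, 5 ≤ n → ∃! p : ℕ × ℕ,
      ((2 ≤ p.1 ∧ p.2 = 0) ∨ (p.1 = p.2 ∧ 2 ≤ p.1)) ∧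
      8 * (p.1 ^ 2 + p.2 ^ 2) = 2 ^ n) := by
  have key : ∀ s t n : ℕ, ((2 ≤ s ∧ t = 0) ∨ (s = t ∧ 2 ≤ s)) →
      (8 * (s ^ 2 + t ^ 2) = 2 ^ n ↔
        (∃ e, 1 ≤ e ∧ s = 2 ^ e ∧ t = 0 ∧ n = 2 * e + 3) ∨
        (∃ e, 1 ≤ e ∧ s = 2 ^ e ∧ t = 2 ^ e ∧ n = 2 * e + 4)) := by
    intro s t n hadm
    constructor
    · intro h
      rcases hadm with ⟨hs, rfl⟩ | ⟨rfl, hs⟩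
      · have hd : s ∣ 2 ^ n := ⟨8 * s, by rw [← h]; ring⟩
        obtain ⟨e, rfl⟩ := aux_pow2_s17 hd
        have he : 1 ≤ e := by
          by_contra he
          interval_cases e
          simp at hs
        have hn : (2:ℕ) ^ n = 2 ^ (2 * e + 3) := by
          rw [← h, two_mul, pow_add, pow_add]; ring
        exact Or.inl ⟨e, he, rfl, rfl, aux_inj hn⟩
      · have hd : s ∣ 2 ^ n := ⟨16 * s, by rw [← h]; ring⟩
        obtain ⟨e, rfl⟩ := aux_pow2_s17 hd
        have he : 1 ≤ e := by
          by_contra he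
          interval_cases e
          simp at hs
        have hn : (2:ℕ) ^ n = 2 ^ (2 * e + 4) := by
          rw [← h, two_mul, pow_add, pow_add]; ring
        exact Or.inr ⟨e, he, rfl, rfl, aux_inj hn⟩
    · rintro (⟨e, he, rfl, rfl, rfl⟩ | ⟨e, he, rfl, rfl, rfl⟩) <;>
        rw [two_mul, pow_add, pow_add] <;> ring
  refine ⟨key, ?_⟩
  intro n hn
  have hone : (2:ℕ) ≤ 2 ^ 1 := by norm_num
  rcases Nat.even_or_odd n with ⟨k, hk⟩ | ⟨k, hk⟩
  · -- n = 2k, set e = k - 2, n = 2e + 4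
    have hk2 : 3 ≤ k := by omega
    refine ⟨(2 ^ (k - 2), 2 ^ (k - 2)), ⟨Or.inr ⟨rfl, ?_⟩, ?_⟩, ?_⟩
    · exact le_trans hone (Nat.pow_le_pow_right (by norm_num) (by omega))
    · have : n = 2 * (k - 2) + 4 := by omega
      rw [this, two_mul, pow_add, pow_add]; ring
    · rintro ⟨a, b⟩ ⟨hadm, heq⟩
      rcases (key a b n hadm).mp heq with ⟨e, he, rfl, rfl, hne⟩ | ⟨e, he, rfl, rfl, hne⟩
      · omega
      · have : e = k - 2 := by omega
        simp [this]
  · -- n = 2k+1, e = k - 1, n = 2e + 3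
    have hk2 : 2 ≤ k := by omega
    refine ⟨(2 ^ (k - 1), 0), ⟨Or.inl ⟨?_, rfl⟩, ?_⟩, ?_⟩
    · exact le_trans hone (Nat.pow_le_pow_right (by norm_num) (by omega))
    · have : n = 2 * (k - 1) + 3 := by omega
      rw [this, two_mul, pow_add, pow_add]; ring
    · rintro ⟨a, b⟩ ⟨hadm, heq⟩
      rcases (key a b n hadm).mp heq with ⟨e, he, rfl, rfl, hne⟩ | ⟨e, he, rfl, rfl, hne⟩
      · have : e = k - 1 := by omega
        simp [this]
      · omega
end
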